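/- Let s > 0, 1 ≤ p < ∞, and define τ, q by 1/τ = 1/p + s/d, 1/q = 1 + s/d. Let f have wavelet coefficients (f_I)_{I∈D}, with Triebel–Lizorkin seminorm |f|_{F^s_{τ,q}} = ‖M_{s,q}f‖_{L^τ} finite, where M_{s,q}f(x) = (Σ_{I∈D} |I|^{-sq/d}|f_I|^q χ_I(x))^{1/q}. Define partial maximal constants m_{s,q,I} = (Σ_{I ⊆ I'} |I'|^{-sq/d}|f_{I'}|^q)^{1/q} and costs c_I = |f|_{F^s_{τ,q}}^{-τ} m_{s,q,I}^{τ-q} |f_I|^q |I|^{1 - qs/d} N. Then Σ_{I∈D} c_I ≤ N. -/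

import Mathlib

open MeasureTheory
open scoped ENNReal NNReal

/-- The dyadic cube `2^j(m + [0,1]^d)` in `ℝ^d`. -/
def dyadicCube (d : ℕ) (j : ℤ) (m : Fin d → ℤ) : Set (EuclideanSpace ℝ (Fin d)) :=
  {x | ∀ i, (2:ℝ) ^ j * (m i : ℝ) ≤ x i ∧ x i ≤ (2:ℝ) ^ j * ((m i : ℝ) + 1)}

/-- The volume `|I| = 2^{jd}` of a dyadic cube of level `j`, as an extended real. -/
noncomputable def dyadicVol (d : ℕ) (I : ℤ × (Fin d → ℤ)) : ℝ≥0∞ :=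
  (2 : ℝ≥0∞) ^ (I.1 * (d : ℤ))

/-- The square-function-type maximal function
`M_{s,q}f(x) = (Σ_{I∈D} |I|^{-sq/d} |f_I|^q χ_I(x))^{1/q}`. -/
noncomputable def sqMaxFn (d : ℕ) (s q : ℝ) (f : ℤ × (Fin d → ℤ) → ℝ)
    (x : EuclideanSpace ℝ (Fin d)) : ℝ≥0∞ :=
  (∑' I : ℤ × (Fin d → ℤ), (dyadicVol d I) ^ (-(s * q) / d) * ENNReal.ofReal |f I| ^ q *
      (dyadicCube d I.1 I.2).indicator (fun _ => (1 : ℝ≥0∞)) x) ^ (1 / q)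

/-- The partial maximal constant `m_{s,q,I} = (Σ_{I ⊆ I'} |I'|^{-sq/d}|f_{I'}|^q)^{1/q}`. -/
noncomputable def partialMaxConst (d : ℕ) (s q : ℝ) (f : ℤ × (Fin d → ℤ) → ℝ)
    (I : ℤ × (Fin d → ℤ)) : ℝ≥0∞ :=
  (∑' I' : {p : ℤ × (Fin d → ℤ) // dyadicCube d I.1 I.2 ⊆ dyadicCube d p.1 p.2},
      (dyadicVol d (I' : ℤ × (Fin d → ℤ))) ^ (-(s * q) / d) *
        ENNReal.ofReal |f (I' : ℤ × (Fin d → ℤ))| ^ q) ^ (1 / q)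

/- ### Auxiliary lemmas -/

/-- The weight `|I|^{-sq/d} |f_I|^q`. -/
noncomputable def termA (d : ℕ) (s q : ℝ) (f : ℤ × (Fin d → ℤ) → ℝ)
    (I : ℤ × (Fin d → ℤ)) : ℝ≥0∞ :=
  (dyadicVol d I) ^ (-(s * q) / d) * ENNReal.ofReal |f I| ^ q

lemma cube_eq (d : ℕ) (j : ℤ) (m : Fin d → ℤ) :
    dyadicCube d j m = (MeasurableEquiv.toLp 2 (Fin d → ℝ)).symm ⁻¹'
      (Set.univ.pi fun i => Set.Icc ((2:ℝ)^j * (m i : ℝ)) ((2:ℝ)^j * ((m i : ℝ) + 1))) := by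
  ext x
  simp only [dyadicCube, Set.mem_setOf_eq, Set.mem_preimage, Set.mem_pi, Set.mem_univ,
    Set.mem_Icc, forall_const]
  rfl

lemma cube_measurable (d : ℕ) (j : ℤ) (m : Fin d → ℤ) : MeasurableSet (dyadicCube d j m) := by
  rw [cube_eq]
  exact (MeasurableSet.univ_pi fun i => measurableSet_Icc).preimage (MeasurableEquiv.measurable _)

lemma two_ofReal_zpow (j : ℤ) : ENNReal.ofReal ((2:ℝ)^j) = (((2:ℝ≥0)^j : ℝ≥0) : ℝ≥0∞) := by
  have h : (2:ℝ)^j = (((2:ℝ≥0)^j : ℝ≥0) : ℝ) := by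
    rw [NNReal.coe_zpow]; norm_num
  rw [h, ENNReal.ofReal_coe_nnreal]

lemma cube_volume (d : ℕ) (j : ℤ) (m : Fin d → ℤ) :
    volume (dyadicCube d j m) = (2:ℝ≥0∞) ^ (j * (d:ℤ)) := by
  rw [cube_eq, (EuclideanSpace.volume_preserving_symm_measurableEquiv_toLp (Fin d)).measure_preimage
    ((MeasurableSet.univ_pi fun i => measurableSet_Icc).nullMeasurableSet)]
  rw [volume_pi_pi]
  have h1 : ∀ i : Fin d, volume (Set.Icc ((2:ℝ)^j * (m i : ℝ)) ((2:ℝ)^j * ((m i : ℝ) + 1)))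
      = (((2:ℝ≥0)^j : ℝ≥0) : ℝ≥0∞) := by
    intro i
    rw [Real.volume_Icc]
    have h2 : (2:ℝ)^j * ((m i : ℝ) + 1) - (2:ℝ)^j * (m i : ℝ) = (2:ℝ)^j := by ring
    rw [h2, two_ofReal_zpow]
  simp only [h1, Finset.prod_const, Finset.card_univ, Fintype.card_fin]
  rw [← ENNReal.coe_pow, ← zpow_natCast ((2:ℝ≥0)^j) d, ← zpow_mul,
    ENNReal.coe_zpow (by norm_num)]
  norm_num

lemma dyadicVol_ne_zero (d : ℕ) (I : ℤ × (Fin d → ℤ)) : dyadicVol d I ≠ 0 :=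
  (ENNReal.zpow_pos (by norm_num) (by norm_num) _).ne'

lemma dyadicVol_ne_top (d : ℕ) (I : ℤ × (Fin d → ℤ)) : dyadicVol d I ≠ ∞ :=
  (ENNReal.zpow_lt_top (by norm_num) (by norm_num) _).ne

/-- `M_{s,q}f(x)^q` recovers the inner sum. -/
lemma sqMaxFn_pow_q (d : ℕ) (s q : ℝ) (hq : q ≠ 0) (f : ℤ × (Fin d → ℤ) → ℝ)
    (x : EuclideanSpace ℝ (Fin d)) :
    sqMaxFn d s q f x ^ q
      = ∑' I : ℤ × (Fin d → ℤ),
          termA d s q f I * (dyadicCube d I.1 I.2).indicator (fun _ => (1 : ℝ≥0∞)) x := by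
  rw [sqMaxFn, ← ENNReal.rpow_mul, one_div_mul_cancel hq, ENNReal.rpow_one]
  rfl

/-- On the cube `I`, the partial maximal constant is dominated by the maximal function. -/
lemma partialMaxConst_le (d : ℕ) (s q : ℝ) (hq : 0 < q) (f : ℤ × (Fin d → ℤ) → ℝ)
    (I : ℤ × (Fin d → ℤ)) (x : EuclideanSpace ℝ (Fin d)) (hx : x ∈ dyadicCube d I.1 I.2) :
    partialMaxConst d s q f I ≤ sqMaxFn d s q f x := by
  rw [partialMaxConst, sqMaxFn]
  refine ENNReal.rpow_le_rpow ?_ (by positivity)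
  calc (∑' I' : {p : ℤ × (Fin d → ℤ) // dyadicCube d I.1 I.2 ⊆ dyadicCube d p.1 p.2},
          (dyadicVol d (I' : ℤ × (Fin d → ℤ))) ^ (-(s * q) / d) *
            ENNReal.ofReal |f (I' : ℤ × (Fin d → ℤ))| ^ q)
      = ∑' I' : {p : ℤ × (Fin d → ℤ) // dyadicCube d I.1 I.2 ⊆ dyadicCube d p.1 p.2},
          ((dyadicVol d (I' : ℤ × (Fin d → ℤ))) ^ (-(s * q) / d) *
            ENNReal.ofReal |f (I' : ℤ × (Fin d → ℤ))| ^ q *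
            (dyadicCube d (I' : ℤ × (Fin d → ℤ)).1 (I' : ℤ × (Fin d → ℤ)).2).indicator
              (fun _ => (1 : ℝ≥0∞)) x) := by
        refine tsum_congr fun I' => ?_
        rw [Set.indicator_of_mem (I'.2 hx), mul_one]
    _ ≤ _ := ENNReal.tsum_comp_le_tsum_of_injective Subtype.val_injective _

/-- The Triebel–Lizorkin cost distribution
`c_I = |f|_{F^s_{τ,q}}^{-τ} m_{s,q,I}^{τ-q} |f_I|^q |I|^{1-qs/d} N` satisfies
`Σ_{I∈D} c_I ≤ N`, where `|f|_{F^s_{τ,q}} = ‖M_{s,q}f‖_{L^τ}`, `1/τ = 1/p + s/d`,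
`1/q = 1 + s/d`. -/
theorem triebel_lizorkin_cost_sum (d : ℕ) (hd : 1 ≤ d) (s p τ q : ℝ)
    (hs : 0 < s) (hp : 1 ≤ p) (hτ : 1 / τ = 1 / p + s / d) (hq : 1 / q = 1 + s / d)
    (f : ℤ × (Fin d → ℤ) → ℝ) (N : ℝ≥0∞)
    (hfin : (∫⁻ x, (sqMaxFn d s q f x) ^ τ) ^ (1 / τ) ≠ ∞) :
    (∑' I : ℤ × (Fin d → ℤ),
        ((∫⁻ x, (sqMaxFn d s q f x) ^ τ) ^ (1 / τ)) ^ (-τ) *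
          (partialMaxConst d s q f I) ^ (τ - q) *
          ENNReal.ofReal |f I| ^ q * (dyadicVol d I) ^ (1 - q * s / d) * N)
      ≤ N := by
  have hd0 : (0:ℝ) < d := by exact_mod_cast Nat.lt_of_lt_of_le Nat.zero_lt_one hd
  have hsd : (0:ℝ) < s / d := div_pos hs hd0
  have hp0 : (0:ℝ) < p := lt_of_lt_of_le one_pos hp
  have hq0 : (0:ℝ) < q := by
    have : (0:ℝ) < 1 / q := by rw [hq]; positivity
    exact one_div_pos.mp this
  have hτ0 : (0:ℝ) < τ := by
    have : (0:ℝ) < 1 / τ := by rw [hτ]; positivity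
    exact one_div_pos.mp this
  have hqτ : q ≤ τ := by
    refine le_of_one_div_le_one_div hτ0 ?_
    rw [hτ, hq]
    have : 1 / p ≤ 1 := by rw [div_le_one hp0]; exact hp
    linarith
  set χ : (ℤ × (Fin d → ℤ)) → EuclideanSpace ℝ (Fin d) → ℝ≥0∞ :=
    fun I => (dyadicCube d I.1 I.2).indicator (fun _ => (1 : ℝ≥0∞)) with hχ
  set M : EuclideanSpace ℝ (Fin d) → ℝ≥0∞ := sqMaxFn d s q f with hM
  set L : ℝ≥0∞ := (∫⁻ x, M x ^ τ) ^ (1 / τ) with hL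
  -- the key integral estimate
  have key : (∑' I : ℤ × (Fin d → ℤ),
      (partialMaxConst d s q f I) ^ (τ - q) * termA d s q f I * dyadicVol d I)
      ≤ ∫⁻ x, M x ^ τ := by
    have step1 : ∀ I : ℤ × (Fin d → ℤ),
        (partialMaxConst d s q f I) ^ (τ - q) * termA d s q f I * dyadicVol d I
          = ∫⁻ x, (partialMaxConst d s q f I) ^ (τ - q) * termA d s q f I * χ I x := by
      intro I
      have : (fun x => (partialMaxConst d s q f I) ^ (τ - q) * termA d s q f I * χ I x)
          = (dyadicCube d I.1 I.2).indicator
              (fun _ => (partialMaxConst d s q f I) ^ (τ - q) * termA d s q f I) := by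
        funext x
        by_cases hx : x ∈ dyadicCube d I.1 I.2 <;> simp [hχ, hx]
      rw [this, lintegral_indicator (cube_measurable d I.1 I.2), setLIntegral_const,
        cube_volume]
      rfl
    calc (∑' I : ℤ × (Fin d → ℤ),
          (partialMaxConst d s q f I) ^ (τ - q) * termA d s q f I * dyadicVol d I)
        = ∑' I : ℤ × (Fin d → ℤ),
            ∫⁻ x, (partialMaxConst d s q f I) ^ (τ - q) * termA d s q f I * χ I x :=
          tsum_congr step1
      _ = ∫⁻ x, ∑' I : ℤ × (Fin d → ℤ),
            (partialMaxConst d s q f I) ^ (τ - q) * termA d s q f I * χ I x := by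
          refine (lintegral_tsum fun I => ?_).symm
          exact (measurable_const.mul
            (measurable_const.indicator (cube_measurable d I.1 I.2))).aemeasurable
      _ ≤ ∫⁻ x, ∑' I : ℤ × (Fin d → ℤ), M x ^ (τ - q) * (termA d s q f I * χ I x) := by
          refine lintegral_mono fun x => ENNReal.tsum_le_tsum fun I => ?_
          by_cases hx : x ∈ dyadicCube d I.1 I.2
          · rw [mul_assoc]
            exact mul_le_mul_left
              (ENNReal.rpow_le_rpow (partialMaxConst_le d s q hq0 f I x hx)
                (by linarith)) _
          · simp [hχ, hx]
      _ = ∫⁻ x, M x ^ (τ - q) * M x ^ q := by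
          refine lintegral_congr fun x => ?_
          rw [ENNReal.tsum_mul_left, sqMaxFn_pow_q d s q hq0.ne' f x]
      _ = ∫⁻ x, M x ^ τ := by
          refine lintegral_congr fun x => ?_
          rw [← ENNReal.rpow_add_of_nonneg (τ - q) q (by linarith) hq0.le,
            sub_add_cancel]
  -- rewrite the summand
  have hterm : ∀ I : ℤ × (Fin d → ℤ),
      L ^ (-τ) * (partialMaxConst d s q f I) ^ (τ - q) * ENNReal.ofReal |f I| ^ q *
          (dyadicVol d I) ^ (1 - q * s / d) * N
        = L ^ (-τ) *
            (((partialMaxConst d s q f I) ^ (τ - q) * termA d s q f I * dyadicVol d I) * N) := by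
    intro I
    have hv : (dyadicVol d I) ^ (1 - q * s / d)
        = (dyadicVol d I) ^ (-(s * q) / d) * dyadicVol d I := by
      rw [show (1 - q * s / d) = (-(s * q) / d) + 1 by ring,
        ENNReal.rpow_add _ _ (dyadicVol_ne_zero d I) (dyadicVol_ne_top d I),
        ENNReal.rpow_one]
    rw [hv, termA]
    ring
  calc (∑' I : ℤ × (Fin d → ℤ),
        ((∫⁻ x, (sqMaxFn d s q f x) ^ τ) ^ (1 / τ)) ^ (-τ) *
          (partialMaxConst d s q f I) ^ (τ - q) *
          ENNReal.ofReal |f I| ^ q * (dyadicVol d I) ^ (1 - q * s / d) * N)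
      = L ^ (-τ) * ((∑' I : ℤ × (Fin d → ℤ),
          (partialMaxConst d s q f I) ^ (τ - q) * termA d s q f I * dyadicVol d I) * N) := by
        rw [tsum_congr hterm, ENNReal.tsum_mul_left, ENNReal.tsum_mul_right]
    _ ≤ L ^ (-τ) * (L ^ τ * N) := by
        refine mul_le_mul_right (mul_le_mul_left ?_ N) _
        have : L ^ τ = ∫⁻ x, M x ^ τ := by
          rw [hL, ← ENNReal.rpow_mul, one_div_mul_cancel hτ0.ne', ENNReal.rpow_one]
        rw [this]; exact key
    _ ≤ N := by
        rcases eq_or_ne L 0 with h0 | h0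
        · rw [h0, ENNReal.zero_rpow_of_pos hτ0]
          simp
        · rw [ENNReal.rpow_neg, ← mul_assoc,
            ENNReal.inv_mul_cancel
              (ENNReal.rpow_pos (h0.bot_lt) hfin).ne'
              (ENNReal.rpow_ne_top_of_nonneg hτ0.le hfin),
            one_mul]
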